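/- If a finite set of open unit hemispheres covers S^2 and has a minimal covering subset of size exactly 6, then the hemispheres in that subset are the six hemispheres determined by three mutually distinct pairs of opposite unit vectors; the intersection of the great-circle boundary of any one hemisphere in the set with the remaining five hemispheres consists of two antipodal pairs of open semicircles. -/

import Mathlib

open scoped RealInnerProductSpace

noncomputable local instance : DecidableEq (EuclideanSpace ℝ (Fin 3)) :=
  Classical.decEq _

/-- The unit sphere `S² ⊆ ℝ³`. -/
noncomputable def unitSphere : Set (EuclideanSpace ℝ (Fin 3)) := Metric.sphere 0 1

/-- The open unit hemisphere `H(v) = {x ∈ S² | ⟪v, x⟫ > 0}`. -/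
noncomputable def openHemisphere (v : EuclideanSpace ℝ (Fin 3)) :
    Set (EuclideanSpace ℝ (Fin 3)) := {x ∈ unitSphere | 0 < ⟪v, x⟫}

/-- The boundary great circle `∂H(v) = {x ∈ S² | ⟪v, x⟫ = 0}`. -/
noncomputable def greatCircle (v : EuclideanSpace ℝ (Fin 3)) :
    Set (EuclideanSpace ℝ (Fin 3)) := {x ∈ unitSphere | ⟪v, x⟫ = 0}

/-- The trace of the open hemisphere `H(w)` on the great circle `∂H(v)`;
for `w ≠ ±v` this is an open semicircle of `∂H(v)`. -/
noncomputable def hemiTrace (v w : EuclideanSpace ℝ (Fin 3)) :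
    Set (EuclideanSpace ℝ (Fin 3)) := greatCircle v ∩ openHemisphere w

local notation "E3" => EuclideanSpace ℝ (Fin 3)

/-- membership in the finitely generated cone of `T` -/
def InCone (T : Finset E3) (y : E3) : Prop :=
  ∃ c : E3 → ℝ, (∀ t ∈ T, 0 ≤ c t) ∧ ∑ t ∈ T, c t • t = y

lemma inCone_mono {T T' : Finset E3} (h : T ⊆ T') {y} (hy : InCone T y) : InCone T' y := by
  obtain ⟨c, hc0, hcs⟩ := hy
  refine ⟨fun t => if t ∈ T then c t else 0, ?_, ?_⟩
  · intro t _; dsimp only; split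
    · exact hc0 _ ‹_›
    · exact le_rfl
  · rw [← hcs]
    rw [Finset.sum_congr rfl (fun t _ => show (if t ∈ T then c t else 0) • t = if t ∈ T then c t • t else 0 by split <;> simp)]
    rw [Finset.sum_ite_mem, Finset.inter_eq_right.2 h]

lemma inCone_add {T : Finset E3} {y z} (hy : InCone T y) (hz : InCone T z) : InCone T (y + z) := by
  obtain ⟨c, hc0, hcs⟩ := hy; obtain ⟨d, hd0, hds⟩ := hz
  exact ⟨c + d, fun t ht => add_nonneg (hc0 t ht) (hd0 t ht), by
    simp only [Pi.add_apply, add_smul, Finset.sum_add_distrib, hcs, hds]⟩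

lemma inCone_smul_mem {T : Finset E3} {t : E3} (ht : t ∈ T) {a : ℝ} (ha : 0 ≤ a) :
    InCone T (a • t) := by
  refine ⟨fun s => if s = t then a else 0, ?_, ?_⟩
  · intro s _; dsimp only; split
    · exact ha
    · exact le_rfl
  · rw [Finset.sum_congr rfl (fun s _ => show (if s = t then a else 0) • s = if s = t then a • s else 0 by split <;> simp)]
    rw [Finset.sum_ite_eq' T t]
    simp [ht]

lemma cover_of_inCone {T : Finset E3} (h : ∀ y, InCone T y) :
    unitSphere ⊆ ⋃ v ∈ T, openHemisphere v := by
  intro x hx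
  have hx1 : ‖x‖ = 1 := by simpa [unitSphere] using hx
  obtain ⟨c, hc0, hcs⟩ := h x
  have h1 : (1:ℝ) = ∑ t ∈ T, c t * ⟪t, x⟫ := by
    have : ⟪x, x⟫ = (1:ℝ) := by
      rw [real_inner_self_eq_norm_sq, hx1]; norm_num
    calc (1:ℝ) = ⟪x, x⟫ := this.symm
      _ = ⟪∑ t ∈ T, c t • t, x⟫ := by rw [hcs]
      _ = ∑ t ∈ T, c t * ⟪t, x⟫ := by
          rw [sum_inner]; exact Finset.sum_congr rfl fun t _ => real_inner_smul_left t x (c t)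
  by_contra hcon
  have hall : ∀ t ∈ T, ⟪t, x⟫ ≤ 0 := by
    intro t ht
    by_contra hpos
    exact hcon (Set.mem_biUnion ht ⟨hx, lt_of_not_ge hpos⟩)
  have : ∑ t ∈ T, c t * ⟪t, x⟫ ≤ 0 :=
    Finset.sum_nonpos fun t ht => mul_nonpos_of_nonneg_of_nonpos (hc0 t ht) (hall t ht)
  linarith [h1 ▸ this]

lemma mem_unitSphere {x : E3} : x ∈ unitSphere ↔ ‖x‖ = 1 := by
  simp [unitSphere]

lemma exists_cover_elt {R : Finset E3}
    (hcov : unitSphere ⊆ ⋃ v ∈ R, openHemisphere v) {x : E3} (hx : ‖x‖ = 1) :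
    ∃ t ∈ R, 0 < ⟪t, x⟫ := by
  have hx' : x ∈ unitSphere := mem_unitSphere.2 hx
  have := hcov hx'
  simp only [Set.mem_iUnion] at this
  obtain ⟨t, ht, hxt⟩ := this
  exact ⟨t, ht, hxt.2⟩

/-- From the covering, every element of `R` appears with positive coefficient
in some nonnegative linear dependence of `R`. -/
lemma exists_nonneg_dep {R : Finset E3}
    (hcov : unitSphere ⊆ ⋃ v ∈ R, openHemisphere v) {v : E3} (hv : v ∈ R) (hvn : ‖v‖ = 1) :
    ∃ c : E3 → ℝ, (∀ t ∈ R, 0 ≤ c t) ∧ 0 < c v ∧ ∑ t ∈ R, c t • t = 0 := by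
  have hRne : R.Nonempty := ⟨v, hv⟩
  set g : E3 → ℝ := fun x => ∑ t ∈ R, max 0 ⟪t, x⟫ with hg
  have hgc : Continuous g := by
    apply continuous_finset_sum
    intro t _
    exact continuous_const.max (Continuous.inner continuous_const continuous_id)
  have hsne : (Metric.sphere (0:E3) 1).Nonempty := by
    refine ⟨EuclideanSpace.single 0 1, ?_⟩
    simp [EuclideanSpace.norm_single]
  obtain ⟨x₀, hx₀s, hx₀min⟩ :=
    (isCompact_sphere (0:E3) 1).exists_isMinOn hsne hgc.continuousOn
  have hx₀n : ‖x₀‖ = 1 := by simpa using hx₀s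
  have hδpos : 0 < g x₀ := by
    obtain ⟨t, ht, htx⟩ := exists_cover_elt hcov hx₀n
    refine Finset.sum_pos' (fun s _ => le_max_left _ _) ⟨t, ht, ?_⟩
    exact lt_max_of_lt_right htx
  set ε : ℝ := g x₀ / R.card with hε
  have hcpos : (0:ℝ) < R.card := by
    exact_mod_cast Finset.card_pos.2 hRne
  have hεpos : 0 < ε := div_pos hδpos hcpos
  have hbound : ∀ x : E3, ‖x‖ = 1 → ∃ t ∈ R, ε ≤ ⟪t, x⟫ := by
    intro x hx
    have hgx : g x₀ ≤ g x := hx₀min (by simpa using hx)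
    by_contra hcon
    push_neg at hcon
    have hlt : g x < ∑ _t ∈ R, ε := by
      refine Finset.sum_lt_sum_of_nonempty hRne ?_
      intro t ht
      exact max_lt hεpos (hcon t ht)
    rw [Finset.sum_const, nsmul_eq_mul, hε, mul_div_cancel₀ _ (ne_of_gt hcpos)] at hlt
    linarith
  -- the point `-(ε/2) • v` lies in the convex hull of `R`
  have hmem : -(ε/2) • v ∈ convexHull ℝ (R : Set E3) := by
    by_contra hnot
    obtain ⟨f, u, hfu, huf⟩ := geometric_hahn_banach_closed_point
      (convex_convexHull ℝ _)
      (((R : Set E3).toFinite.isCompact_convexHull (𝕜 := ℝ)).isClosed) hnot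
    set y : E3 := (InnerProductSpace.toDual ℝ E3).symm f with hy
    have hyf : ∀ w : E3, ⟪y, w⟫ = f w := fun w => InnerProductSpace.toDual_symm_apply
    have hvhull : v ∈ convexHull ℝ (R : Set E3) := subset_convexHull ℝ _ hv
    have hyne : y ≠ 0 := by
      intro h0
      have h1 : f v < u := hfu v hvhull
      have h2 : f v = 0 := by rw [← hyf, h0, inner_zero_left]
      have h3 : f (-(ε/2) • v) = 0 := by rw [← hyf, h0, inner_zero_left]
      rw [h3] at huf; rw [h2] at h1; linarith
    have hypos : 0 < ‖y‖ := norm_pos_iff.2 hyne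
    obtain ⟨t, ht, htb⟩ := hbound (‖y‖⁻¹ • y) (by
      rw [norm_smul, norm_inv, norm_norm, inv_mul_cancel₀ (ne_of_gt hypos)])
    have hty : ε * ‖y‖ ≤ ⟪y, t⟫ := by
      have : ⟪t, ‖y‖⁻¹ • y⟫ = ‖y‖⁻¹ * ⟪y, t⟫ := by
        rw [real_inner_smul_right, real_inner_comm]
      rw [this] at htb
      calc ε * ‖y‖ = (‖y‖⁻¹ * ⟪y,t⟫) * ‖y‖ - (‖y‖⁻¹ * ⟪y,t⟫ - ε) * ‖y‖ := by ring
        _ ≤ (‖y‖⁻¹ * ⟪y,t⟫) * ‖y‖ := by nlinarith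
        _ = ⟪y, t⟫ := by field_simp
    have h4 : f t < u := hfu t (subset_convexHull ℝ _ ht)
    have h5 : u < f (-(ε/2) • v) := huf
    have h6 : f (-(ε/2) • v) = -(ε/2) * ⟪y, v⟫ := by
      rw [← hyf, inner_smul_right]
    have h7 : ⟪y, v⟫ ≥ -(‖y‖) := by
      have := abs_real_inner_le_norm y v
      rw [hvn, mul_one] at this
      cases abs_le.1 this with
      | intro h _ => linarith
    have h8 : f t = ⟪y, t⟫ := (hyf t).symm
    nlinarith
  rw [Finset.convexHull_eq] at hmem
  obtain ⟨w, hw0, hw1, hwc⟩ := hmem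
  have hwc' : ∑ t ∈ R, w t • t = -(ε/2) • v := by
    rw [← hwc, Finset.centerMass, hw1]
    simp
  refine ⟨fun t => w t + (if t = v then ε/2 else 0), ?_, ?_, ?_⟩
  · intro t ht
    have := hw0 t ht
    dsimp only; split <;> [linarith [hεpos]; linarith]
  · dsimp only; rw [if_pos rfl]
    linarith [hw0 v hv, hεpos]
  · have : ∑ t ∈ R, (w t + if t = v then ε/2 else 0) • t
        = ∑ t ∈ R, w t • t + ∑ t ∈ R, (if t = v then ε/2 else 0 : ℝ) • t := by
      rw [← Finset.sum_add_distrib]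
      exact Finset.sum_congr rfl fun t _ => by rw [add_smul]
    rw [this, hwc']
    rw [Finset.sum_congr rfl
      (fun t _ => show (if t = v then ε/2 else (0:ℝ)) • t = if t = v then (ε/2) • t else 0 by
        split <;> simp)]
    rw [Finset.sum_ite_eq' R v]
    simp [hv]

/-- every proper "erased" subfamily is linearly independent -/
def ErasedIndep (C : Finset E3) : Prop :=
  ∀ t₀ ∈ C, ∀ μ : E3 → ℝ, ∑ t ∈ C.erase t₀, μ t • t = 0 → ∀ t ∈ C.erase t₀, μ t = 0

lemma sum_filter_pos_eq {T : Finset E3} {f : E3 → ℝ} (h0 : ∀ t ∈ T, 0 ≤ f t) :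
    ∑ t ∈ T.filter (fun t => 0 < f t), f t • t = ∑ t ∈ T, f t • t := by
  refine Finset.sum_subset (Finset.filter_subset _ _) ?_
  intro t ht hnt
  have h1 : ¬ 0 < f t := fun h => hnt (Finset.mem_filter.2 ⟨ht, h⟩)
  have : f t = 0 := le_antisymm (not_lt.1 h1) (h0 t ht)
  simp [this]

/-- one reduction step: a nontrivial dependence vanishing at `t₀` whose value
at `v` is nonpositive and which is positive somewhere lets us shrink `T`. -/
lemma reduce_step {T : Finset E3} {c : E3 → ℝ} {v : E3} (hv : v ∈ T)
    (hc : ∀ t ∈ T, 0 < c t) (hsum : ∑ t ∈ T, c t • t = 0)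
    {μ : E3 → ℝ} (hμsum : ∑ t ∈ T, μ t • t = 0)
    (hA : ∃ t ∈ T, 0 < μ t) (hμv : μ v ≤ 0) :
    ∃ T' : Finset E3, T' ⊆ T ∧ T'.card < T.card ∧ v ∈ T' ∧
      ∃ c' : E3 → ℝ, (∀ t ∈ T', 0 < c' t) ∧ ∑ t ∈ T', c' t • t = 0 := by
  classical
  set A : Finset E3 := T.filter (fun t => 0 < μ t) with hAdef
  have hAne : A.Nonempty := by
    obtain ⟨t, ht, htp⟩ := hA
    exact ⟨t, Finset.mem_filter.2 ⟨ht, htp⟩⟩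
  obtain ⟨t₁, ht₁A, ht₁inf⟩ := Finset.exists_mem_eq_inf' hAne (fun t => c t / μ t)
  set s := A.inf' hAne (fun t => c t / μ t) with hsdef
  have ht₁T : t₁ ∈ T := (Finset.mem_filter.1 ht₁A).1
  have ht₁μ : 0 < μ t₁ := (Finset.mem_filter.1 ht₁A).2
  have hspos : 0 < s := by
    rw [ht₁inf]
    exact div_pos (hc t₁ ht₁T) ht₁μ
  set ν : E3 → ℝ := fun t => c t - s * μ t with hν
  have hν0 : ∀ t ∈ T, 0 ≤ ν t := by
    intro t ht
    by_cases htμ : 0 < μ t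
    · have htA : t ∈ A := Finset.mem_filter.2 ⟨ht, htμ⟩
      have : s ≤ c t / μ t := Finset.inf'_le _ htA
      have := (le_div_iff₀ htμ).1 this
      simp only [hν]; linarith
    · have : s * μ t ≤ 0 := mul_nonpos_of_nonneg_of_nonpos hspos.le (not_lt.1 htμ)
      have := hc t ht
      simp only [hν]; linarith
  have hνt₁ : ν t₁ = 0 := by
    simp only [hν]
    rw [ht₁inf]
    field_simp
    ring
  have hνv : 0 < ν v := by
    have : s * μ v ≤ 0 := mul_nonpos_of_nonneg_of_nonpos hspos.le hμv
    have := hc v hv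
    simp only [hν]; linarith
  have hνsum : ∑ t ∈ T, ν t • t = 0 := by
    have : ∀ t ∈ T, ν t • t = c t • t - s • (μ t • t) := by
      intro t _
      simp only [hν, sub_smul, smul_smul]
    rw [Finset.sum_congr rfl this, Finset.sum_sub_distrib, hsum, ← Finset.smul_sum, hμsum,
      smul_zero, sub_zero]
  refine ⟨T.filter (fun t => 0 < ν t), Finset.filter_subset _ _, ?_, ?_, ν, ?_, ?_⟩
  · refine Finset.card_lt_card ?_
    rw [Finset.ssubset_iff_of_subset (Finset.filter_subset _ _)]
    exact ⟨t₁, ht₁T, fun h => by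
      have := (Finset.mem_filter.1 h).2
      rw [hνt₁] at this
      exact lt_irrefl 0 this⟩
  · exact Finset.mem_filter.2 ⟨hv, hνv⟩
  · exact fun t ht => (Finset.mem_filter.1 ht).2
  · rw [sum_filter_pos_eq hν0, hνsum]

lemma exists_circuit {T : Finset E3} {v : E3} {c : E3 → ℝ} (hv : v ∈ T)
    (hc0 : ∀ t ∈ T, 0 ≤ c t) (hcv : 0 < c v) (hsum : ∑ t ∈ T, c t • t = 0) :
    ∃ C : Finset E3, C ⊆ T ∧ v ∈ C ∧ ∃ d : E3 → ℝ,
      (∀ t ∈ C, 0 < d t) ∧ (∑ t ∈ C, d t • t = 0) ∧ ErasedIndep C := by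
  classical
  -- first pass to a strictly positive dependence
  have main : ∀ n : ℕ, ∀ T₁ : Finset E3, T₁.card ≤ n → T₁ ⊆ T → v ∈ T₁ →
      ∀ c₁ : E3 → ℝ, (∀ t ∈ T₁, 0 < c₁ t) → (∑ t ∈ T₁, c₁ t • t = 0) →
      ∃ C : Finset E3, C ⊆ T ∧ v ∈ C ∧ ∃ d : E3 → ℝ,
        (∀ t ∈ C, 0 < d t) ∧ (∑ t ∈ C, d t • t = 0) ∧ ErasedIndep C := by
    intro n
    induction n with
    | zero =>
      intro T₁ hcard _ hvT₁ _ _ _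
      rw [Nat.le_zero, Finset.card_eq_zero] at hcard
      simp [hcard] at hvT₁
    | succ n ih =>
      intro T₁ hcard hT₁T hvT₁ c₁ hc₁ hsum₁
      by_cases hEI : ErasedIndep T₁
      · exact ⟨T₁, hT₁T, hvT₁, c₁, hc₁, hsum₁, hEI⟩
      · -- extract a nontrivial dependence on an erased subfamily
        simp only [ErasedIndep, not_forall] at hEI
        obtain ⟨t₀, ht₀, μ₀, hμ₀sum, t₁, ht₁, hμ₀t₁⟩ := hEI
        set μ : E3 → ℝ := fun t => if t ∈ T₁.erase t₀ then μ₀ t else 0 with hμdef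
        have hμsum : ∑ t ∈ T₁, μ t • t = 0 := by
          rw [← Finset.sum_erase_add _ _ ht₀]
          have h1 : ∀ t ∈ T₁.erase t₀, μ t • t = μ₀ t • t := by
            intro t ht
            show (if t ∈ T₁.erase t₀ then μ₀ t else 0) • t = μ₀ t • t
            rw [if_pos ht]
          have h2 : μ t₀ = 0 := by
            show (if t₀ ∈ T₁.erase t₀ then μ₀ t₀ else 0) = 0
            rw [if_neg (Finset.notMem_erase t₀ T₁)]
          rw [Finset.sum_congr rfl h1, hμ₀sum, h2, zero_smul, add_zero]
        have ht₀μ : μ t₀ = 0 := by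
          show (if t₀ ∈ T₁.erase t₀ then μ₀ t₀ else 0) = 0
          rw [if_neg (Finset.notMem_erase t₀ T₁)]
        have ht₁' : μ t₁ ≠ 0 := by
          show (if t₁ ∈ T₁.erase t₀ then μ₀ t₁ else 0) ≠ 0
          rw [if_pos ht₁]; exact hμ₀t₁
        have ht₁T₁ : t₁ ∈ T₁ := Finset.mem_of_mem_erase ht₁
        -- find a shrinking step
        have key : ∃ T' : Finset E3, T' ⊆ T₁ ∧ T'.card < T₁.card ∧ v ∈ T' ∧
            ∃ c' : E3 → ℝ, (∀ t ∈ T', 0 < c' t) ∧ ∑ t ∈ T', c' t • t = 0 := by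
          rcases lt_trichotomy (μ v) 0 with hμv | hμv | hμv
          · by_cases hpos : ∃ t ∈ T₁, 0 < μ t
            · exact reduce_step hvT₁ hc₁ hsum₁ hμsum hpos hμv.le
            · -- all μ ≤ 0 on T₁ : use -μ directly as a new positive dependence
              push_neg at hpos
              refine ⟨T₁.filter (fun t => 0 < -μ t), Finset.filter_subset _ _, ?_, ?_, fun t => -μ t, ?_, ?_⟩
              · refine Finset.card_lt_card ?_
                rw [Finset.ssubset_iff_of_subset (Finset.filter_subset _ _)]
                refine ⟨t₀, ht₀, fun h => ?_⟩
                have := (Finset.mem_filter.1 h).2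
                rw [ht₀μ] at this; simp at this
              · exact Finset.mem_filter.2 ⟨hvT₁, by linarith⟩
              · exact fun t ht => (Finset.mem_filter.1 ht).2
              · have h0 : ∀ t ∈ T₁, 0 ≤ -μ t := fun t ht => by linarith [hpos t ht]
                rw [sum_filter_pos_eq h0]
                have : ∀ t ∈ T₁, (-μ t) • t = -(μ t • t) := by intro t _; simp [neg_smul]
                rw [Finset.sum_congr rfl this, Finset.sum_neg_distrib, hμsum, neg_zero]
          · -- μ v = 0
            rcases lt_or_gt_of_ne ht₁' with hneg | hpos
            · refine reduce_step hvT₁ hc₁ hsum₁ (μ := fun t => -μ t) ?_ ⟨t₁, ht₁T₁, by linarith⟩ (by rw [hμv]; simp)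
              have : ∀ t ∈ T₁, (-μ t) • t = -(μ t • t) := by intro t _; simp [neg_smul]
              rw [Finset.sum_congr rfl this, Finset.sum_neg_distrib, hμsum, neg_zero]
            · exact reduce_step hvT₁ hc₁ hsum₁ hμsum ⟨t₁, ht₁T₁, hpos⟩ hμv.le
          · by_cases hneg : ∃ t ∈ T₁, μ t < 0
            · obtain ⟨t₂, ht₂, ht₂n⟩ := hneg
              refine reduce_step hvT₁ hc₁ hsum₁ (μ := fun t => -μ t) ?_ ⟨t₂, ht₂, by linarith⟩ (by linarith)
              have : ∀ t ∈ T₁, (-μ t) • t = -(μ t • t) := by intro t _; simp [neg_smul]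
              rw [Finset.sum_congr rfl this, Finset.sum_neg_distrib, hμsum, neg_zero]
            · -- all μ ≥ 0 on T₁ : μ itself is a new positive dependence
              push_neg at hneg
              refine ⟨T₁.filter (fun t => 0 < μ t), Finset.filter_subset _ _, ?_, ?_, μ, ?_, ?_⟩
              · refine Finset.card_lt_card ?_
                rw [Finset.ssubset_iff_of_subset (Finset.filter_subset _ _)]
                refine ⟨t₀, ht₀, fun h => ?_⟩
                have := (Finset.mem_filter.1 h).2
                rw [ht₀μ] at this; simp at this
              · exact Finset.mem_filter.2 ⟨hvT₁, hμv⟩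
              · exact fun t ht => (Finset.mem_filter.1 ht).2
              · rw [sum_filter_pos_eq hneg, hμsum]
        obtain ⟨T', hT'sub, hT'card, hvT', c', hc', hsum'⟩ := key
        exact ih T' (by omega) (hT'sub.trans hT₁T) hvT' c' hc' hsum'
  -- apply to the strict-support restriction of `c`
  set T₁ : Finset E3 := T.filter (fun t => 0 < c t) with hT₁
  refine main T₁.card T₁ le_rfl (Finset.filter_subset _ _) (Finset.mem_filter.2 ⟨hv, hcv⟩)
    c (fun t ht => (Finset.mem_filter.1 ht).2) ?_
  rw [sum_filter_pos_eq hc0, hsum]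

lemma erasedIndep_li {C : Finset E3} (h : ErasedIndep C) {t₀ : E3} (ht₀ : t₀ ∈ C) :
    LinearIndependent ℝ (fun x : (C.erase t₀ : Finset E3) => (x : E3)) := by
  classical
  rw [Fintype.linearIndependent_iff]
  intro g hg i
  have h2 : ∀ x : {x // x ∈ C.erase t₀},
      (if ht : (↑x : E3) ∈ C.erase t₀ then g ⟨↑x, ht⟩ else 0) • (↑x : E3) = g x • ↑x := by
    intro x
    rw [dif_pos x.2]
  have hsum : ∑ t ∈ C.erase t₀,
      (fun t => if ht : t ∈ C.erase t₀ then g ⟨t, ht⟩ else 0) t • t = 0 := by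
    have h1 := (Finset.sum_attach (C.erase t₀)
      (fun t => (fun t => if ht : t ∈ C.erase t₀ then g ⟨t, ht⟩ else 0) t • t)).symm
    rw [h1, Finset.sum_congr rfl (fun x _ => h2 x), ← Finset.univ_eq_attach]
    exact hg
  have h3 := h t₀ ht₀ _ hsum i i.2
  change (if ht : (↑i : E3) ∈ C.erase t₀ then g ⟨↑i, ht⟩ else 0) = 0 at h3
  rw [dif_pos i.2] at h3
  exact h3

lemma circuit_card_le {C : Finset E3} (h : ErasedIndep C) {v : E3} (hv : v ∈ C) :
    C.card ≤ 4 := by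
  have li := erasedIndep_li h hv
  have hle := li.fintype_card_le_finrank
  rw [Fintype.card_coe, Finset.card_erase_of_mem hv, finrank_euclideanSpace_fin] at hle
  omega

lemma inCone_of_mem_span_circuit {C : Finset E3} (hCne : C.Nonempty) {d : E3 → ℝ}
    (hd : ∀ t ∈ C, 0 < d t) (hsum : ∑ t ∈ C, d t • t = 0) {y : E3}
    (hy : y ∈ Submodule.span ℝ (C : Set E3)) : InCone C y := by
  obtain ⟨f, -, hf⟩ := Submodule.mem_span_finset.1 hy
  set M := (C.sup' hCne (fun t => (-(f t)) / d t)) ⊔ 0 with hM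
  refine ⟨fun t => f t + M * d t, ?_, ?_⟩
  · intro t ht
    have h1 : (-(f t))/d t ≤ M := le_trans (Finset.le_sup' (fun t => -f t / d t) ht) le_sup_left
    have h2 : 0 < d t := hd t ht
    have h3 := (div_le_iff₀ h2).1 h1
    dsimp only
    nlinarith
  · have hexp : ∀ t ∈ C, (f t + M * d t) • t = f t • t + M • (d t • t) := by
      intro t _
      rw [add_smul, smul_smul]
    rw [Finset.sum_congr rfl hexp, Finset.sum_add_distrib, ← Finset.smul_sum, hf, hsum,
      smul_zero, add_zero]

lemma neg_mem_of_min_cover {R : Finset E3} (hR : ∀ v ∈ R, ‖v‖ = 1) (hcard : R.card = 6)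
    (hcov : unitSphere ⊆ ⋃ v ∈ R, openHemisphere v)
    (hmin : ∀ s ∈ R, ¬ unitSphere ⊆ ⋃ v ∈ R.erase s, openHemisphere v)
    {v : E3} (hv : v ∈ R) : -v ∈ R := by
  classical
  obtain ⟨c, hc0, hcv, hcs⟩ := exists_nonneg_dep hcov hv (hR v hv)
  obtain ⟨C, hCR, hvC, d, hd, hds, hEI⟩ := exists_circuit hv hc0 hcv hcs
  have hC4 : C.card ≤ 4 := circuit_card_le hEI hvC
  have hC1 : 1 ≤ C.card := Finset.card_pos.2 ⟨v, hvC⟩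
  -- a generic contradiction maker
  have contra : ∀ b ∈ R, b ∉ C → (∀ y : E3, InCone (R.erase b) y) → False := by
    intro b hbR hbC hall
    exact hmin b hbR (cover_of_inCone hall)
  have hCsub : ∀ b ∈ R, b ∉ C → C ⊆ R.erase b := by
    intro b _ hbC
    exact Finset.subset_erase.2 ⟨hCR, hbC⟩
  interval_cases hn : C.card
  · -- C.card = 1 : v = 0, impossible
    obtain ⟨a, ha⟩ := Finset.card_eq_one.1 hn
    rw [ha] at hvC hds
    rw [Finset.mem_singleton] at hvC
    subst hvC
    rw [Finset.sum_singleton] at hds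
    have hv0 : v = 0 := by
      rcases smul_eq_zero.1 hds with h | h
      · exact absurd h (ne_of_gt (hd v (by rw [ha]; exact Finset.mem_singleton_self v)))
      · exact h
    have := hR v hv
    rw [hv0, norm_zero] at this
    norm_num at this
  · -- C.card = 2 : C = {v, -v}
    have herase : (C.erase v).card = 1 := by
      rw [Finset.card_erase_of_mem hvC, hn]
    obtain ⟨t, ht⟩ := Finset.card_eq_one.1 herase
    have htv : t ≠ v := by
      have : t ∈ C.erase v := by rw [ht]; exact Finset.mem_singleton_self t
      exact Finset.ne_of_mem_erase this
    have htC : t ∈ C := Finset.mem_of_mem_erase (by rw [ht]; exact Finset.mem_singleton_self t)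
    have hCvt : C = insert v {t} := by
      rw [← ht, Finset.insert_erase hvC]
    rw [hCvt, Finset.sum_insert (by simp [Ne.symm htv]), Finset.sum_singleton] at hds
    -- t = -(d v / d t) • v
    have hdt : 0 < d t := hd t htC
    have hdv : 0 < d v := hd v hvC
    have hdt' : (d t : ℝ) ≠ 0 := ne_of_gt hdt
    have htexp : t = (-(d v) / d t) • v := by
      apply smul_right_injective E3 hdt'
      show d t • t = d t • ((-(d v) / d t) • v)
      rw [smul_smul]
      have hmul : d t * (-(d v) / d t) = -(d v) := by field_simp
      rw [hmul, neg_smul]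
      rw [add_comm] at hds
      exact eq_neg_of_add_eq_zero_left hds
    have hnorm : |(-(d v)) / d t| = 1 := by
      have h1 : ‖t‖ = 1 := hR t (hCR htC)
      have h2 : ‖v‖ = 1 := hR v hv
      rw [htexp, norm_smul, h2, mul_one, Real.norm_eq_abs] at h1
      exact h1
    have : (-(d v)) / d t = -1 := by
      rcases abs_eq (by norm_num : (0:ℝ) ≤ 1) |>.1 hnorm with h | h
      · exfalso
        have : (-(d v)) / d t < 0 := div_neg_of_neg_of_pos (by linarith) hdt
        linarith
      · exact h
    rw [this, neg_one_smul] at htexp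
    rw [← htexp]
    exact hCR htC
  · -- C.card = 3 : impossible
    exfalso
    set s : Finset E3 := C.erase v with hsdef
    have hscard : s.card = 2 := by rw [hsdef, Finset.card_erase_of_mem hvC, hn]
    have li := erasedIndep_li hEI hvC
    set K : Submodule ℝ E3 := Submodule.span ℝ (C : Set E3) with hK
    have hKs : K = Submodule.span ℝ (s : Set E3) := by
      apply le_antisymm
      · rw [hK, Submodule.span_le]
        intro x hx
        rw [Finset.mem_coe] at hx
        by_cases hxv : x = v
        · subst hxv
          have hsum' : d x • x + ∑ t ∈ s, d t • t = 0 := by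
            rw [← hds, ← Finset.insert_erase hvC, Finset.sum_insert (Finset.notMem_erase _ _)]
          have hdx : d x ≠ 0 := ne_of_gt (hd x hvC)
          have h6 : d x • x = -∑ t ∈ s, d t • t := eq_neg_of_add_eq_zero_left hsum'
          have h7 : d x • x ∈ Submodule.span ℝ (s : Set E3) := by
            rw [h6]
            exact Submodule.neg_mem _ (Submodule.sum_mem _ fun t ht =>
              Submodule.smul_mem _ _ (Submodule.subset_span (Finset.mem_coe.2 ht)))
          have h8 : x = (d x)⁻¹ • (d x • x) := by
            rw [smul_smul, inv_mul_cancel₀ hdx, one_smul]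
          rw [h8]
          exact Submodule.smul_mem _ _ h7
        · exact Submodule.subset_span (Finset.mem_coe.2 (Finset.mem_erase.2 ⟨hxv, hx⟩))
      · rw [hK]
        exact Submodule.span_mono (by exact_mod_cast Finset.erase_subset v C)
    have hK2 : Module.finrank ℝ K = 2 := by
      rw [hKs, finrank_span_finset_eq_card li, hscard]
    have hKor : Module.finrank ℝ (Kᗮ : Submodule ℝ E3) = 1 := by
      have := Submodule.finrank_add_finrank_orthogonal K
      rw [hK2, finrank_euclideanSpace_fin] at this
      omega
    have hKbot : (Kᗮ : Submodule ℝ E3) ≠ ⊥ := by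
      intro h
      rw [h, finrank_bot] at hKor
      norm_num at hKor
    obtain ⟨n₀, hn₀K, hn₀⟩ := Submodule.exists_mem_ne_zero_of_ne_bot hKbot
    set n : E3 := ‖n₀‖⁻¹ • n₀ with hndef
    have hn1 : ‖n‖ = 1 := norm_smul_inv_norm hn₀
    have hnK : n ∈ Kᗮ := Submodule.smul_mem _ _ hn₀K
    have hnC : ∀ t ∈ C, ⟪n, t⟫ = 0 := by
      intro t ht
      rw [real_inner_comm]
      exact (Submodule.mem_orthogonal K n).1 hnK t (Submodule.subset_span (Finset.mem_coe.2 ht))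
    obtain ⟨bp, hbpR, hbp⟩ := exists_cover_elt hcov hn1
    obtain ⟨bm, hbmR, hbm0⟩ := exists_cover_elt hcov (x := -n) (by rw [norm_neg]; exact hn1)
    have hbm : ⟪bm, n⟫ < 0 := by
      rw [inner_neg_right] at hbm0
      linarith
    have hbpn : 0 < ⟪n, bp⟫ := by rw [real_inner_comm]; exact hbp
    have hbmn : ⟪n, bm⟫ < 0 := by rw [real_inner_comm]; exact hbm
    have hbpC : bp ∉ C := fun h => by
      rw [real_inner_comm] at hbp
      rw [hnC bp h] at hbp
      exact lt_irrefl 0 hbp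
    have hbmC : bm ∉ C := fun h => by
      rw [real_inner_comm] at hbm
      rw [hnC bm h] at hbm
      exact lt_irrefl 0 hbm
    -- choose the removable element together with surviving positive/negative witnesses
    have hchoice : ∃ b ∈ R, b ∉ C ∧ ∃ p ∈ R, p ∉ C ∧ p ≠ b ∧ 0 < ⟪n, p⟫ ∧
        ∃ m ∈ R, m ∉ C ∧ m ≠ b ∧ ⟪n, m⟫ < 0 := by
      by_cases hp2 : ∃ p ∈ R, p ∉ C ∧ p ≠ bp ∧ 0 < ⟪n, p⟫
      · obtain ⟨p, hpR, hpC, hpne, hpn⟩ := hp2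
        have hbmbp : bm ≠ bp := fun h => by rw [h] at hbmn; linarith
        exact ⟨bp, hbpR, hbpC, p, hpR, hpC, hpne, hpn, bm, hbmR, hbmC, hbmbp, hbmn⟩
      · by_cases hm2 : ∃ m ∈ R, m ∉ C ∧ m ≠ bm ∧ ⟪n, m⟫ < 0
        · obtain ⟨m, hmR, hmC, hmne, hmn⟩ := hm2
          have hbpbm : bp ≠ bm := fun h => by rw [h] at hbpn; linarith
          exact ⟨bm, hbmR, hbmC, bp, hbpR, hbpC, hbpbm, hbpn, m, hmR, hmC, hmne, hmn⟩
        · push_neg at hp2 hm2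
          have hsd : ((R \ C) \ {bp, bm}).Nonempty := by
            rw [← Finset.card_pos]
            have h1 : (R \ C).card = 3 := by
              rw [Finset.card_sdiff_of_subset hCR, hcard, hn]
            have h2 : ({bp, bm} : Finset E3).card ≤ 2 := by
              apply le_trans (Finset.card_insert_le _ _)
              simp
            have h3 := Finset.card_le_card_sdiff_add_card (s := R \ C) (t := ({bp, bm} : Finset E3))
            omega
          obtain ⟨b, hb⟩ := hsd
          rw [Finset.mem_sdiff, Finset.mem_sdiff] at hb
          obtain ⟨⟨hbR, hbC⟩, hbne⟩ := hb
          rw [Finset.mem_insert, Finset.mem_singleton] at hbne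
          push_neg at hbne
          exact ⟨b, hbR, hbC, bp, hbpR, hbpC, hbne.1.symm, hbpn,
            bm, hbmR, hbmC, hbne.2.symm, hbmn⟩
    obtain ⟨b, hbR, hbC, p, hpR, hpC, hpne, hpn, m, hmR, hmC, hmne, hmn⟩ := hchoice
    -- K is the orthogonal complement of the span of n
    have hKn : K = (Submodule.span ℝ ({n} : Set E3))ᗮ := by
      apply Submodule.eq_of_le_of_finrank_eq
      · intro x hx
        rw [Submodule.mem_orthogonal]
        intro u hu
        obtain ⟨r, rfl⟩ := Submodule.mem_span_singleton.1 hu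
        rw [real_inner_smul_left]
        have : ⟪x, n⟫ = 0 := (Submodule.mem_orthogonal K n).1 hnK x hx
        rw [real_inner_comm] at this
        rw [this, mul_zero]
      · have h1 : Module.finrank ℝ (Submodule.span ℝ ({n} : Set E3)) = 1 := by
          rw [finrank_span_singleton (by intro h; rw [h, norm_zero] at hn1; norm_num at hn1)]
        have h2 := Submodule.finrank_add_finrank_orthogonal (Submodule.span ℝ ({n} : Set E3))
        rw [h1, finrank_euclideanSpace_fin] at h2
        rw [hK2]
        omega
    -- decomposition of an arbitrary vector
    have decomp : ∀ w y : E3, ⟪n, w⟫ ≠ 0 → 0 ≤ ⟪n, y⟫ / ⟪n, w⟫ → w ∈ R.erase b →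
        InCone (R.erase b) y := by
      intro w y hw hq hwmem
      have h1 : ⟪n, y - (⟪n, y⟫ / ⟪n, w⟫) • w⟫ = 0 := by
        rw [inner_sub_right, real_inner_smul_right, div_mul_cancel₀ _ hw, sub_self]
      have h2 : y - (⟪n, y⟫ / ⟪n, w⟫) • w ∈ K := by
        rw [hKn, Submodule.mem_orthogonal]
        intro u hu
        obtain ⟨r, rfl⟩ := Submodule.mem_span_singleton.1 hu
        rw [real_inner_smul_left, h1, mul_zero]
      have h3 : InCone C (y - (⟪n, y⟫ / ⟪n, w⟫) • w) :=
        inCone_of_mem_span_circuit ⟨v, hvC⟩ hd hds h2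
      have h4 := inCone_add (inCone_mono (hCsub b hbR hbC) h3) (inCone_smul_mem hwmem hq)
      rwa [sub_add_cancel] at h4
    apply contra b hbR hbC
    intro y
    rcases le_or_gt 0 ⟪n, y⟫ with hy | hy
    · exact decomp p y (ne_of_gt hpn) (div_nonneg hy hpn.le) (Finset.mem_erase.2 ⟨hpne, hpR⟩)
    · exact decomp m y (ne_of_lt hmn) (div_nonneg_iff.2 (Or.inr ⟨hy.le, hmn.le⟩))
        (Finset.mem_erase.2 ⟨hmne, hmR⟩)
  · -- C.card = 4 : impossible
    exfalso
    have li := erasedIndep_li hEI hvC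
    have hsp : Submodule.span ℝ (((C.erase v) : Finset E3) : Set E3) = ⊤ := by
      have hene : (C.erase v).Nonempty := by
        rw [← Finset.card_pos, Finset.card_erase_of_mem hvC, hn]
        norm_num
      haveI : Nonempty {x // x ∈ C.erase v} := ⟨⟨hene.choose, hene.choose_spec⟩⟩
      have hcardeq : Fintype.card ((C.erase v : Finset E3) : Type) = Module.finrank ℝ E3 := by
        rw [Fintype.card_coe, Finset.card_erase_of_mem hvC, hn, finrank_euclideanSpace_fin]
      have := li.span_eq_top_of_card_eq_finrank hcardeq
      rwa [Subtype.range_coe_subtype, Finset.setOf_mem] at this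
    have hspC : Submodule.span ℝ (C : Set E3) = ⊤ := by
      apply top_unique
      rw [← hsp]
      exact Submodule.span_mono (by exact_mod_cast Finset.erase_subset v C)
    have hex : (R \ C).Nonempty := by
      rw [← Finset.card_pos, Finset.card_sdiff_of_subset hCR, hcard, hn]
      norm_num
    obtain ⟨b, hb⟩ := hex
    rw [Finset.mem_sdiff] at hb
    apply contra b hb.1 hb.2
    intro y
    exact inCone_mono (hCsub b hb.1 hb.2)
      (inCone_of_mem_span_circuit ⟨v, hvC⟩ hd hds (by rw [hspC]; trivial))

lemma ne_neg_self {u : E3} (hu : ‖u‖ = 1) : u ≠ -u := by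
  intro h
  have h2 : (2:ℝ) • u = 0 := by
    rw [two_smul]
    nth_rewrite 2 [h]
    simp
  rcases smul_eq_zero.1 h2 with h' | h'
  · norm_num at h'
  · rw [h', norm_zero] at hu; norm_num at hu

lemma three_pairs {R : Finset E3} (hR : ∀ v ∈ R, ‖v‖ = 1) (hcard : R.card = 6)
    (hneg : ∀ v ∈ R, -v ∈ R) :
    ∃ u v w : E3, u ∈ R ∧ v ∈ R ∧ w ∈ R ∧
      v ≠ u ∧ v ≠ -u ∧ w ≠ u ∧ w ≠ -u ∧ w ≠ v ∧ w ≠ -v ∧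
      R = {u, -u, v, -v, w, -w} := by
  classical
  obtain ⟨u, huR⟩ := Finset.card_pos.1 (by rw [hcard]; norm_num)
  have hunn : u ≠ -u := ne_neg_self (hR u huR)
  have hnuR : -u ∈ R := hneg u huR
  set R2 : Finset E3 := (R.erase u).erase (-u) with hR2
  have hnuRe : -u ∈ R.erase u := Finset.mem_erase.2 ⟨Ne.symm hunn, hnuR⟩
  have hR2card : R2.card = 4 := by
    rw [hR2, Finset.card_erase_of_mem hnuRe, Finset.card_erase_of_mem huR, hcard]
  obtain ⟨v, hvR2⟩ := Finset.card_pos.1 (by rw [hR2card]; norm_num)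
  have hvR : v ∈ R := Finset.mem_of_mem_erase (Finset.mem_of_mem_erase hvR2)
  have hvnu : v ≠ -u := Finset.ne_of_mem_erase hvR2
  have hvu : v ≠ u := Finset.ne_of_mem_erase (Finset.mem_of_mem_erase hvR2)
  have hvnn : v ≠ -v := ne_neg_self (hR v hvR)
  have hnvR2 : -v ∈ R2 := by
    refine Finset.mem_erase.2 ⟨?_, Finset.mem_erase.2 ⟨?_, hneg v hvR⟩⟩
    · exact fun h => hvu (neg_inj.1 h)
    · exact fun h => hvnu (neg_eq_iff_eq_neg.1 h)
  set R3 : Finset E3 := (R2.erase v).erase (-v) with hR3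
  have hnvR2e : -v ∈ R2.erase v := Finset.mem_erase.2 ⟨Ne.symm hvnn, hnvR2⟩
  have hR3card : R3.card = 2 := by
    rw [hR3, Finset.card_erase_of_mem hnvR2e, Finset.card_erase_of_mem hvR2, hR2card]
  obtain ⟨w, hwR3⟩ := Finset.card_pos.1 (by rw [hR3card]; norm_num)
  have hwR2 : w ∈ R2 := Finset.mem_of_mem_erase (Finset.mem_of_mem_erase hwR3)
  have hwR : w ∈ R := Finset.mem_of_mem_erase (Finset.mem_of_mem_erase hwR2)
  have hwnv : w ≠ -v := Finset.ne_of_mem_erase hwR3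
  have hwv : w ≠ v := Finset.ne_of_mem_erase (Finset.mem_of_mem_erase hwR3)
  have hwnu : w ≠ -u := Finset.ne_of_mem_erase hwR2
  have hwu : w ≠ u := Finset.ne_of_mem_erase (Finset.mem_of_mem_erase hwR2)
  have hwnn : w ≠ -w := ne_neg_self (hR w hwR)
  have hnwR3 : -w ∈ R3 := by
    have hnwR : -w ∈ R := hneg w hwR
    refine Finset.mem_erase.2 ⟨?_, Finset.mem_erase.2 ⟨?_, Finset.mem_erase.2 ⟨?_,
      Finset.mem_erase.2 ⟨?_, hnwR⟩⟩⟩⟩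
    · exact fun h => hwv (neg_inj.1 h)
    · exact fun h => hwnv (neg_eq_iff_eq_neg.1 h)
    · exact fun h => hwu (neg_inj.1 h)
    · exact fun h => hwnu (neg_eq_iff_eq_neg.1 h)
  have hR3eq : R3 = {w, -w} := by
    symm
    apply Finset.eq_of_subset_of_card_le
    · intro y hy
      rcases Finset.mem_insert.1 hy with rfl | hy
      · exact hwR3
      · rw [Finset.mem_singleton.1 hy]; exact hnwR3
    · rw [hR3card, Finset.card_insert_of_notMem (by simp [hwnn]), Finset.card_singleton]
  refine ⟨u, v, w, huR, hvR, hwR, hvu, hvnu, hwu, hwnu, hwv, hwnv, ?_⟩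
  have e3 : insert (-v) R3 = R2.erase v := Finset.insert_erase hnvR2e
  have e2 : insert v (R2.erase v) = R2 := Finset.insert_erase hvR2
  have e1 : insert (-u) R2 = R.erase u := Finset.insert_erase hnuRe
  have e0 : insert u (R.erase u) = R := Finset.insert_erase huR
  rw [← e0, ← e1, ← e2, ← e3, hR3eq]

lemma greatCircle_closed (x : E3) : IsClosed (greatCircle x) := by
  have : greatCircle x = unitSphere ∩ {y : E3 | ⟪x, y⟫ = 0} := rfl
  rw [this]
  exact Metric.isClosed_sphere.inter
    (isClosed_eq (Continuous.inner continuous_const continuous_id) continuous_const)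

/-- projection of `p` to the orthogonal complement of `x` -/
lemma proj_facts {x p : E3} (hx : ‖x‖ = 1) (hp : ‖p‖ = 1) (hpx : p ≠ x) (hpnx : p ≠ -x) :
    ∃ w : E3, ⟪x, w⟫ = 0 ∧ 0 < ⟪p, w⟫ ∧ w = p - ⟪x, p⟫ • x := by
  set w : E3 := p - ⟪x, p⟫ • x with hw
  have hxx : ⟪x, x⟫ = 1 := by rw [real_inner_self_eq_norm_sq, hx]; norm_num
  have hxw : ⟪x, w⟫ = 0 := by
    rw [hw, inner_sub_right, real_inner_smul_right, hxx, mul_one, sub_self]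
  have hwne : w ≠ 0 := by
    intro h0
    have hpeq : p = ⟪x, p⟫ • x := by
      have := sub_eq_zero.1 h0
      exact this
    have habs : |⟪x, p⟫| = 1 := by
      have := congrArg norm hpeq
      rw [hp, norm_smul, hx, mul_one, Real.norm_eq_abs] at this
      exact this.symm
    rcases abs_eq (by norm_num : (0:ℝ) ≤ 1) |>.1 habs with h | h
    · rw [h, one_smul] at hpeq; exact hpx hpeq
    · rw [h, neg_one_smul] at hpeq; exact hpnx hpeq
  have hpw : ⟪p, w⟫ = ⟪w, w⟫ := by
    have : ⟪w, w⟫ = ⟪p, w⟫ - ⟪x, p⟫ * ⟪x, w⟫ := by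
      nth_rewrite 1 [hw]
      rw [inner_sub_left, real_inner_smul_left]
    rw [this, hxw, mul_zero, sub_zero]
  have hpos : 0 < ⟪p, w⟫ := by
    rw [hpw, real_inner_self_eq_norm_sq]
    exact pow_pos (norm_pos_iff.2 hwne) 2
  exact ⟨w, hxw, hpos, hw⟩

lemma trace_nonempty {x p : E3} (hx : ‖x‖ = 1) (hp : ‖p‖ = 1) (hpx : p ≠ x) (hpnx : p ≠ -x) :
    (hemiTrace x p).Nonempty := by
  obtain ⟨w, hxw, hpw, -⟩ := proj_facts hx hp hpx hpnx
  have hwne : w ≠ 0 := by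
    intro h
    rw [h, inner_zero_right] at hpw
    exact lt_irrefl 0 hpw
  refine ⟨‖w‖⁻¹ • w, ⟨⟨?_, ?_⟩, ?_, ?_⟩⟩
  · exact mem_unitSphere.2 (norm_smul_inv_norm hwne)
  · rw [real_inner_smul_right, hxw, mul_zero]
  · exact mem_unitSphere.2 (norm_smul_inv_norm hwne)
  · rw [real_inner_smul_right]
    exact mul_pos (inv_pos.2 (norm_pos_iff.2 hwne)) hpw

lemma trace_closure {x p : E3} (hx : ‖x‖ = 1) (hp : ‖p‖ = 1) (hpx : p ≠ x) (hpnx : p ≠ -x) :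
    closure (hemiTrace x p ∪ hemiTrace x (-p)) = greatCircle x := by
  apply Set.Subset.antisymm
  · exact closure_minimal (Set.union_subset Set.inter_subset_left Set.inter_subset_left)
      (greatCircle_closed x)
  intro z hz
  obtain ⟨hzs, hxz⟩ := hz
  have hz1 : ‖z‖ = 1 := mem_unitSphere.1 hzs
  by_cases hpz : ⟪p, z⟫ = 0
  swap
  · -- z itself is in the union
    apply subset_closure
    rcases lt_or_gt_of_ne hpz with h | h
    · right
      exact ⟨⟨hzs, hxz⟩, hzs, by rw [inner_neg_left]; linarith⟩
    · left
      exact ⟨⟨hzs, hxz⟩, hzs, h⟩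
  · -- approximate z by rotating slightly towards z'
    obtain ⟨w, hxw, hpw, hwdef⟩ := proj_facts hx hp hpx hpnx
    have hwne : w ≠ 0 := by
      intro h
      rw [h, inner_zero_right] at hpw
      exact lt_irrefl 0 hpw
    have hzw : ⟪z, w⟫ = 0 := by
      have hzp : ⟪z, p⟫ = 0 := by rw [real_inner_comm]; exact hpz
      have hzx : ⟪z, x⟫ = 0 := by rw [real_inner_comm]; exact hxz
      rw [hwdef, inner_sub_right, real_inner_smul_right, hzp, hzx, mul_zero, sub_zero]
    set z' : E3 := ‖w‖⁻¹ • w with hz'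
    have hz'1 : ‖z'‖ = 1 := norm_smul_inv_norm hwne
    have hxz' : ⟪x, z'⟫ = 0 := by rw [hz', real_inner_smul_right, hxw, mul_zero]
    have hzz' : ⟪z, z'⟫ = 0 := by rw [hz', real_inner_smul_right, hzw, mul_zero]
    have hpz' : 0 < ⟪p, z'⟫ := by
      rw [hz', real_inner_smul_right]
      exact mul_pos (inv_pos.2 (norm_pos_iff.2 hwne)) hpw
    set u : ℕ → E3 := fun k =>
      Real.cos (1/((k:ℝ)+1)) • z + Real.sin (1/((k:ℝ)+1)) • z' with hu
    have hsin : ∀ k : ℕ, 0 < Real.sin (1/((k:ℝ)+1)) := by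
      intro k
      apply Real.sin_pos_of_pos_of_lt_pi
      · positivity
      · have h1 : 1/((k:ℝ)+1) ≤ 1 := by
          rw [div_le_one (by positivity)]
          simp [Nat.cast_nonneg]
        linarith [Real.pi_gt_three]
    have hmemb : ∀ k : ℕ, u k ∈ hemiTrace x p ∪ hemiTrace x (-p) := by
      intro k
      set ck := Real.cos (1/((k:ℝ)+1))
      set sk := Real.sin (1/((k:ℝ)+1))
      have hzz : ⟪z, z⟫ = 1 := by rw [real_inner_self_eq_norm_sq, hz1]; norm_num
      have hz'z'1 : ⟪z', z'⟫ = 1 := by rw [real_inner_self_eq_norm_sq, hz'1]; norm_num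
      have hnorm : ‖u k‖ = 1 := by
        have hinner : ⟪u k, u k⟫ = 1 := by
          rw [hu]
          dsimp only
          rw [real_inner_add_add_self]
          simp only [real_inner_smul_left, real_inner_smul_right, hzz, hzz', hz'z'1]
          have := Real.sin_sq_add_cos_sq (1/((k:ℝ)+1))
          ring_nf
          ring_nf at this
          linarith
        have h2 : ‖u k‖ ^ 2 = 1 := by rw [← real_inner_self_eq_norm_sq, hinner]
        nlinarith [norm_nonneg (u k), sq_nonneg (‖u k‖ - 1), sq_nonneg (‖u k‖ + 1)]
      have hxu : ⟪x, u k⟫ = 0 := by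
        rw [hu]
        dsimp only
        rw [inner_add_right, real_inner_smul_right, real_inner_smul_right, hxz, hxz',
          mul_zero, mul_zero, add_zero]
      have hpu : ⟪p, u k⟫ = sk * ⟪p, z'⟫ := by
        rw [hu]
        dsimp only
        rw [inner_add_right, real_inner_smul_right, real_inner_smul_right, hpz, mul_zero,
          zero_add]
      have hpupos : 0 < ⟪p, u k⟫ := by
        rw [hpu]
        exact mul_pos (hsin k) hpz'
      left
      exact ⟨⟨mem_unitSphere.2 hnorm, hxu⟩, mem_unitSphere.2 hnorm, hpupos⟩
    -- the sequence tends to z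
    have htend : Filter.Tendsto u Filter.atTop (nhds z) := by
      have h1 : Filter.Tendsto (fun k : ℕ => 1/((k:ℝ)+1)) Filter.atTop (nhds 0) :=
        tendsto_one_div_add_atTop_nhds_zero_nat
      have hcos : Filter.Tendsto (fun k : ℕ => Real.cos (1/((k:ℝ)+1))) Filter.atTop
          (nhds 1) := by
        have := (Real.continuous_cos.tendsto 0).comp h1
        simpa [Function.comp_def] using this
      have hsin' : Filter.Tendsto (fun k : ℕ => Real.sin (1/((k:ℝ)+1))) Filter.atTop
          (nhds 0) := by
        have := (Real.continuous_sin.tendsto 0).comp h1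
        simpa [Function.comp_def] using this
      have h2 := (hcos.smul_const z).add (hsin'.smul_const z')
      rw [one_smul, zero_smul, add_zero] at h2
      exact h2
    exact mem_closure_of_tendsto htend (Filter.Eventually.of_forall hmemb)

lemma part2_for {x p q : E3} (hx : ‖x‖ = 1) (hp : ‖p‖ = 1) (hq : ‖q‖ = 1)
    (hpx : p ≠ x) (hpnx : p ≠ -x) (hqx : q ≠ x) (hqnx : q ≠ -x) :
    (∀ y ∈ ({p, -p, q, -q} : Set E3), (hemiTrace x y).Nonempty) ∧
    closure (hemiTrace x p ∪ hemiTrace x (-p)) = greatCircle x ∧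
    closure (hemiTrace x q ∪ hemiTrace x (-q)) = greatCircle x := by
  have hnp : ‖-p‖ = 1 := by rw [norm_neg]; exact hp
  have hnq : ‖-q‖ = 1 := by rw [norm_neg]; exact hq
  have hnpx : -p ≠ x := fun h => hpnx (neg_eq_iff_eq_neg.1 h)
  have hnpnx : -p ≠ -x := fun h => hpx (neg_inj.1 h)
  have hnqx : -q ≠ x := fun h => hqnx (neg_eq_iff_eq_neg.1 h)
  have hnqnx : -q ≠ -x := fun h => hqx (neg_inj.1 h)
  refine ⟨?_, trace_closure hx hp hpx hpnx, trace_closure hx hq hqx hqnx⟩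
  intro y hy
  simp only [Set.mem_insert_iff, Set.mem_singleton_iff] at hy
  rcases hy with rfl | rfl | rfl | rfl
  · exact trace_nonempty hx hp hpx hpnx
  · exact trace_nonempty hx hnp hnpx hnpnx
  · exact trace_nonempty hx hq hqx hqnx
  · exact trace_nonempty hx hnq hnqx hnqnx

lemma sdiff_pairs {a b c : E3} (hba : b ≠ a) (hbna : b ≠ -a) (hca : c ≠ a) (hcna : c ≠ -a) :
    ({a, -a, b, -b, c, -c} : Set E3) \ {a, -a} = ({b, -b, c, -c} : Set E3) := by
  have h1 : -b ≠ a := fun h => hbna (neg_eq_iff_eq_neg.1 h)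
  have h2 : -b ≠ -a := fun h => hba (neg_inj.1 h)
  have h3 : -c ≠ a := fun h => hcna (neg_eq_iff_eq_neg.1 h)
  have h4 : -c ≠ -a := fun h => hca (neg_inj.1 h)
  ext y
  simp only [Set.mem_diff, Set.mem_insert_iff, Set.mem_singleton_iff]
  constructor
  · rintro ⟨h5, h6⟩
    push_neg at h6
    tauto
  · rintro (rfl | rfl | rfl | rfl) <;>
      exact ⟨by tauto, by push_neg; constructor <;> assumption⟩

lemma set_shuffle1 (a b c : E3) :
    ({a, -a, b, -b, c, -c} : Set E3) = {b, -b, a, -a, c, -c} := by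
  ext y
  simp only [Set.mem_insert_iff, Set.mem_singleton_iff]
  tauto

lemma set_shuffle2 (a b c : E3) :
    ({a, -a, b, -b, c, -c} : Set E3) = {c, -c, a, -a, b, -b} := by
  ext y
  simp only [Set.mem_insert_iff, Set.mem_singleton_iff]
  tauto

/-- If a finite set of open unit hemispheres covers `S²` and has a minimal
covering subset `R` of size exactly `6`, then `R` consists of the six
hemispheres determined by three mutually distinct pairs of opposite unit
vectors, and for every member `x` of `R`, the nonempty traces of the
remaining five hemispheres on the great circle `∂H(x)` are the traces of the
four members other than `±x` and form two antipodal pairs of open semicircles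
(the closure of the union of each antipodal pair is the whole great circle). -/
theorem minimal_six_cover_structure
    (S : Finset (EuclideanSpace ℝ (Fin 3))) (hS : ∀ v ∈ S, ‖v‖ = 1)
    (hScover : unitSphere ⊆ ⋃ v ∈ S, openHemisphere v)
    (R : Finset (EuclideanSpace ℝ (Fin 3))) (hRS : R ⊆ S) (hcard : R.card = 6)
    (hRcover : unitSphere ⊆ ⋃ v ∈ R, openHemisphere v)
    (hmin : ∀ s ∈ R, ¬ unitSphere ⊆ ⋃ v ∈ R.erase s, openHemisphere v) :
    (∃ u v w : EuclideanSpace ℝ (Fin 3), R = {u, -u, v, -v, w, -w}) ∧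
    ∀ x ∈ R, ∃ p q : EuclideanSpace ℝ (Fin 3),
      (R : Set (EuclideanSpace ℝ (Fin 3))) \ {x, -x} = {p, -p, q, -q} ∧
      (∀ y ∈ ({p, -p, q, -q} : Set (EuclideanSpace ℝ (Fin 3))),
        (hemiTrace x y).Nonempty) ∧
      closure (hemiTrace x p ∪ hemiTrace x (-p)) = greatCircle x ∧
      closure (hemiTrace x q ∪ hemiTrace x (-q)) = greatCircle x := by
  have hRnorm : ∀ v ∈ R, ‖v‖ = 1 := fun v hv => hS v (hRS hv)
  have hneg : ∀ v ∈ R, -v ∈ R := fun v hv =>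
    neg_mem_of_min_cover hRnorm hcard hRcover hmin hv
  obtain ⟨u, v, w, huR, hvR, hwR, hvu, hvnu, hwu, hwnu, hwv, hwnv, hReq⟩ :=
    three_pairs hRnorm hcard hneg
  have hu1 : ‖u‖ = 1 := hRnorm u huR
  have hv1 : ‖v‖ = 1 := hRnorm v hvR
  have hw1 : ‖w‖ = 1 := hRnorm w hwR
  have hnu1 : ‖-u‖ = 1 := by rw [norm_neg]; exact hu1
  have hnv1 : ‖-v‖ = 1 := by rw [norm_neg]; exact hv1
  have hnw1 : ‖-w‖ = 1 := by rw [norm_neg]; exact hw1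
  have hRset : (R : Set (EuclideanSpace ℝ (Fin 3))) = {u, -u, v, -v, w, -w} := by
    rw [hReq]
    simp only [Finset.coe_insert, Finset.coe_singleton]
  -- derived inequalities
  have huv : u ≠ v := hvu.symm
  have hunv : u ≠ -v := fun h => hvnu (by rw [h, neg_neg])
  have huw : u ≠ w := hwu.symm
  have hunw : u ≠ -w := fun h => hwnu (by rw [h, neg_neg])
  have hvw : v ≠ w := hwv.symm
  have hvnw : v ≠ -w := fun h => hwnv (by rw [h, neg_neg])
  have hvnnu : v ≠ -(-u) := by rw [neg_neg]; exact hvu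
  have hwnnu : w ≠ -(-u) := by rw [neg_neg]; exact hwu
  have hunnv : u ≠ -(-v) := by rw [neg_neg]; exact huv
  have hwnnv : w ≠ -(-v) := by rw [neg_neg]; exact hwv
  have hunnw : u ≠ -(-w) := by rw [neg_neg]; exact huw
  have hvnnw : v ≠ -(-w) := by rw [neg_neg]; exact hvw
  have hpairu : ({-u, -(-u)} : Set (EuclideanSpace ℝ (Fin 3))) = {u, -u} := by
    rw [neg_neg]; exact Set.pair_comm _ _
  have hpairv : ({-v, -(-v)} : Set (EuclideanSpace ℝ (Fin 3))) = {v, -v} := by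
    rw [neg_neg]; exact Set.pair_comm _ _
  have hpairw : ({-w, -(-w)} : Set (EuclideanSpace ℝ (Fin 3))) = {w, -w} := by
    rw [neg_neg]; exact Set.pair_comm _ _
  refine ⟨⟨u, v, w, hReq⟩, ?_⟩
  intro x hx
  rw [hReq] at hx
  simp only [Finset.mem_insert, Finset.mem_singleton] at hx
  rcases hx with hx | hx | hx | hx | hx | hx <;> subst hx
  · refine ⟨v, w, ?_, ?_⟩
    · rw [hRset]
      exact sdiff_pairs hvu hvnu hwu hwnu
    · exact part2_for hu1 hv1 hw1 hvu hvnu hwu hwnu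
  · refine ⟨v, w, ?_, ?_⟩
    · rw [hRset, hpairu]
      exact sdiff_pairs hvu hvnu hwu hwnu
    · exact part2_for hnu1 hv1 hw1 hvnu hvnnu hwnu hwnnu
  · refine ⟨u, w, ?_, ?_⟩
    · rw [hRset, set_shuffle1 u x w]
      exact sdiff_pairs huv hunv hwv hwnv
    · exact part2_for hv1 hu1 hw1 huv hunv hwv hwnv
  · refine ⟨u, w, ?_, ?_⟩
    · rw [hRset, set_shuffle1 u v w, hpairv]
      exact sdiff_pairs huv hunv hwv hwnv
    · exact part2_for hnv1 hu1 hw1 hunv hunnv hwnv hwnnv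
  · refine ⟨u, v, ?_, ?_⟩
    · rw [hRset, set_shuffle2 u v x]
      exact sdiff_pairs huw hunw hvw hvnw
    · exact part2_for hw1 hu1 hv1 huw hunw hvw hvnw
  · refine ⟨u, v, ?_, ?_⟩
    · rw [hRset, set_shuffle2 u v w, hpairw]
      exact sdiff_pairs huw hunw hvw hvnw
    · exact part2_for hnw1 hu1 hv1 hunw hunnw hvnw hvnnw
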